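/- Let p be an odd prime, k a finite field with #k = p^f, k₂ a quadratic field extension of k, and n > 1 an odd integer dividing p^f + 1. Let u ∈ k₂^× have multiplicative order exactly n and norm N_{k₂/k}(u) = 1. Regard V := k₂ as a 2-dimensional k-vector space; let m_u ∈ GL_k(V) be multiplication by u and let φ ∈ GL_k(V) be the nontrivial k-automorphism of k₂ (x ↦ x^{#k}); let C be the cyclic subgroup of GL_k(V) generated by m_u and H the subgroup generated by m_u and φ (so H is dihedral of order 2n). Then the following are equivalent: (i) there exists a nonzero 𝔽_p-linear map f : End_k(V) → V with f(gAg⁻¹) = g f(A) for all g ∈ C; (ii) the same with C replaced by H; (iii) there exists i ∈ ℕ with p^i ≡ 2 (mod n); (iv) there exists i ∈ ℕ with p^i ≡ 2 (mod n) and n divides 2^f − (−1)^i. -/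

import Mathlib

open Polynomial

/-- In a field `K`, any element fixed by `x ↦ x ^ #F` lies in the image of any
ring hom from the finite field `F`. -/
private lemma aux_mem_range {K F : Type*} [Field K] [Field F] [Fintype F]
    (σ : F →+* K) (c : K) (hc : c ^ Fintype.card F = c) : c ∈ Set.range σ := by
  classical
  by_contra hmem
  set m := Fintype.card F with hm
  have hm1 : 1 < m := Fintype.one_lt_card
  have hg0 : (X ^ m - X : K[X]) ≠ 0 := FiniteField.X_pow_card_sub_X_ne_zero K hm1
  set T : Finset K := Finset.univ.image σ ∪ {c} with hT
  have hsub : T ⊆ (X ^ m - X : K[X]).roots.toFinset := by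
    intro x hx
    rw [Multiset.mem_toFinset, Polynomial.mem_roots hg0]
    have hroot : x ^ m = x := by
      rcases Finset.mem_union.mp hx with h | h
      · rcases Finset.mem_image.mp h with ⟨a, -, rfl⟩
        rw [← map_pow, FiniteField.pow_card]
      · rw [Finset.mem_singleton.mp h]; exact hc
    simp [Polynomial.IsRoot, hroot]
  have hdisj : c ∉ Finset.univ.image σ := by
    intro h
    rcases Finset.mem_image.mp h with ⟨a, -, ha⟩
    exact hmem ⟨a, ha⟩
  have hcardT : T.card = m + 1 := by
    rw [hT, Finset.card_union_of_disjoint (by simp [hdisj]),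
      Finset.card_image_of_injective _ σ.injective]
    simp
    exact hm.symm
  have h1 : T.card ≤ (X ^ m - X : K[X]).roots.toFinset.card := Finset.card_le_card hsub
  have h2 : (X ^ m - X : K[X]).roots.toFinset.card ≤ Multiset.card (X ^ m - X : K[X]).roots :=
    Multiset.toFinset_card_le _
  have h3 : Multiset.card (X ^ m - X : K[X]).roots ≤ m := by
    have := Polynomial.card_roots' (X ^ m - X : K[X])
    rwa [FiniteField.X_pow_card_sub_X_natDegree_eq K hm1] at this
  omega

/-- In a finite field of cardinality `p ^ m`, any root of the minimal polynomial of `v`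
over `ZMod p` is a Frobenius power of `v`. -/
private lemma frob_conj {K : Type*} [Field K] [Fintype K] (p m : ℕ) [Fact p.Prime]
    [CharP K p] [Algebra (ZMod p) K] (hK : Fintype.card K = p ^ m) (hm : m ≠ 0) (v w : K)
    (hw : Polynomial.aeval w (minpoly (ZMod p) v) = 0) :
    ∃ j < m, w = v ^ p ^ j := by
  classical
  set Q : K[X] := ∏ j ∈ Finset.range m, (X - C (v ^ p ^ j)) with hQ
  have hvm : v ^ p ^ m = v := by rw [← hK]; exact FiniteField.pow_card v
  have hmap : Q.map (frobenius K p) = Q := by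
    have hfac : ∀ j : ℕ, (X - C (v ^ p ^ j)).map (frobenius K p) = X - C (v ^ p ^ (j + 1)) := by
      intro j
      rw [Polynomial.map_sub, Polynomial.map_X, Polynomial.map_C]
      congr 1
      rw [frobenius_def, ← pow_mul, ← pow_succ]
    rw [hQ, Polynomial.map_prod]
    simp only [hfac]
    have key : (∏ j ∈ Finset.range m, (X - C (v ^ p ^ (j + 1)))) * (X - C (v ^ p ^ 0)) =
        (∏ j ∈ Finset.range m, (X - C (v ^ p ^ j))) * (X - C (v ^ p ^ m)) := by
      rw [← Finset.prod_range_succ' (fun j => (X - C (v ^ p ^ j))) m,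
        ← Finset.prod_range_succ (fun j => (X - C (v ^ p ^ j))) m]
    rw [hvm, pow_zero, pow_one] at key
    exact mul_right_cancel₀ (Polynomial.X_sub_C_ne_zero v) key
  obtain ⟨Q₀, hQ₀⟩ : ∃ Q₀ : (ZMod p)[X], Q₀.map (algebraMap (ZMod p) K) = Q := by
    rw [← Polynomial.mem_lifts, Polynomial.lifts_iff_coeff_lifts]
    intro i
    apply aux_mem_range
    have := congrArg (fun P : K[X] => P.coeff i) hmap
    simpa [Polynomial.coeff_map, frobenius_def, ZMod.card p] using this
  have hQv : Q.eval v = 0 := by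
    rw [hQ, Polynomial.eval_prod]
    apply Finset.prod_eq_zero (Finset.mem_range.mpr (Nat.pos_of_ne_zero hm))
    simp
  have hdvd : minpoly (ZMod p) v ∣ Q₀ := by
    apply minpoly.dvd
    rw [Polynomial.aeval_def, ← Polynomial.eval_map, hQ₀, hQv]
  have hwQ : Q.eval w = 0 := by
    obtain ⟨r, hr⟩ := hdvd
    have : Polynomial.aeval w Q₀ = 0 := by rw [hr, map_mul, hw, zero_mul]
    rwa [Polynomial.aeval_def, ← Polynomial.eval_map, hQ₀] at this
  rw [hQ, Polynomial.eval_prod, Finset.prod_eq_zero_iff] at hwQ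
  obtain ⟨j, hj, hj2⟩ := hwQ
  refine ⟨j, Finset.mem_range.mp hj, ?_⟩
  have hsub : w - v ^ p ^ j = 0 := by simpa using hj2
  exact sub_eq_zero.mp hsub

set_option maxHeartbeats 1000000 in
theorem stmt6 {k k₂ : Type} [Field k] [Fintype k] [Field k₂] [Algebra k k₂]
    (p f n : ℕ) (hp : p.Prime) (hp2 : p ≠ 2) [CharP k p]
    (hcard : Fintype.card k = p ^ f)
    (hquad : Module.finrank k k₂ = 2)
    (hn1 : 1 < n) (hnodd : Odd n) (hndvd : n ∣ p ^ f + 1)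
    (u : k₂ˣ) (hu : orderOf u = n) (hnorm : Algebra.norm k (u : k₂) = 1)
    (mu φ : k₂ ≃ₗ[k] k₂)
    (hmu : ∀ x : k₂, mu x = (u : k₂) * x)
    (hφ : ∀ x : k₂, φ x = x ^ (Fintype.card k)) :
    [(∃ F : Module.End k k₂ → k₂,
        (∃ A, F A ≠ 0) ∧
        (∀ A B, F (A + B) = F A + F B) ∧
        (∀ g ∈ Subgroup.zpowers mu, ∀ A : Module.End k k₂,
          F ((g : k₂ ≃ₗ[k] k₂).toLinearMap ∘ₗ A ∘ₗ (g : k₂ ≃ₗ[k] k₂).symm.toLinearMap) =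
            (g : k₂ ≃ₗ[k] k₂) (F A))),
     (∃ F : Module.End k k₂ → k₂,
        (∃ A, F A ≠ 0) ∧
        (∀ A B, F (A + B) = F A + F B) ∧
        (∀ g ∈ Subgroup.closure ({mu, φ} : Set (k₂ ≃ₗ[k] k₂)), ∀ A : Module.End k k₂,
          F ((g : k₂ ≃ₗ[k] k₂).toLinearMap ∘ₗ A ∘ₗ (g : k₂ ≃ₗ[k] k₂).symm.toLinearMap) =
            (g : k₂ ≃ₗ[k] k₂) (F A))),
     (∃ i : ℕ, (p : ℤ) ^ i ≡ 2 [ZMOD n]),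
     (∃ i : ℕ, (p : ℤ) ^ i ≡ 2 [ZMOD n] ∧ (n : ℤ) ∣ 2 ^ f - (-1) ^ i)].TFAE := by
  classical
  haveI : Fact p.Prime := ⟨hp⟩
  haveI : NeZero n := ⟨by omega⟩
  set q := Fintype.card k with hqdef
  have hq2 : 2 ≤ q := Fintype.one_lt_card
  have hf : f ≠ 0 := by
    rintro rfl
    rw [pow_zero] at hcard
    omega
  haveI : FiniteDimensional k k₂ := FiniteDimensional.of_finrank_pos (by rw [hquad]; norm_num)
  letI : Fintype k₂ := Module.fintypeOfFintype (Module.finBasis k k₂)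
  have hcard₂ : Fintype.card k₂ = q ^ 2 := by
    rw [Module.card_fintype (Module.finBasis k k₂)]
    simp [hquad]
    exact hqdef.symm
  haveI : CharP k₂ p := charP_of_injective_algebraMap (algebraMap k k₂).injective p
  -- arithmetic of `u`
  have hu0 : (u : k₂) ≠ 0 := Units.ne_zero u
  have hu1 : (u : k₂) ≠ 1 := by
    intro h
    have : u = 1 := Units.ext h
    rw [this, orderOf_one] at hu; omega
  have huq1 : (u : k₂) ^ (q + 1) = 1 := by
    have h : u ^ (q + 1) = 1 := by
      rw [← orderOf_dvd_iff_pow_eq_one, hu, hcard]; exact hndvd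
    rw [← Units.val_pow_eq_pow_val, h, Units.val_one]
  have hinvq : ((u : k₂)⁻¹) ^ q = (u : k₂) := by
    have huq : (u : k₂) ^ q * (u : k₂) = 1 := by rw [← pow_succ]; exact huq1
    rw [inv_pow]
    exact inv_eq_of_mul_eq_one_right huq
  -- Frobenius additivity
  have haddq : ∀ x y : k₂, (x + y) ^ q = x ^ q + y ^ q := by
    intro x y; rw [hcard]; exact add_pow_char_pow x y p f
  have hφ1 : φ (1 : k₂) = 1 := by rw [hφ]; exact one_pow _
  -- an element outside `k`
  obtain ⟨t, ht⟩ : ∃ t : k₂, t ∉ Set.range (algebraMap k k₂) := by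
    by_contra h
    push_neg at h
    have hsurj : Function.Surjective (algebraMap k k₂) := fun x => h x
    have hle := Fintype.card_le_of_surjective _ hsurj
    rw [hcard₂] at hle
    nlinarith
  have htq : t ^ q ≠ t := fun h => ht (aux_mem_range (algebraMap k k₂) t h)
  have hts : t - t ^ q ≠ 0 := sub_ne_zero.mpr fun h => htq h.symm
  -- `{1, t}` spans `k₂` over `k`
  have hspan : Submodule.span k ({1, t} : Set k₂) = ⊤ := by
    have hli : LinearIndependent k ![(1 : k₂), t] := by
      rw [LinearIndependent.pair_iff]
      intro sc rc hsr
      by_cases hr : rc = 0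
      · subst hr
        refine ⟨?_, rfl⟩
        rw [zero_smul, add_zero, ← Algebra.algebraMap_eq_smul_one] at hsr
        exact (_root_.map_eq_zero _).mp hsr
      · exfalso
        apply ht
        refine ⟨-sc / rc, ?_⟩
        rw [← Algebra.algebraMap_eq_smul_one, Algebra.smul_def] at hsr
        have hrk : algebraMap k k₂ rc ≠ 0 := fun hh => hr ((_root_.map_eq_zero _).mp hh)
        rw [map_div₀, map_neg]
        field_simp
        linear_combination -hsr
    have hsp := hli.span_eq_top_of_card_eq_finrank (by simp [hquad])
    have hrange : Set.range ![(1 : k₂), t] = {1, t} := by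
      ext x
      simp [Fin.exists_fin_two, or_comm]
    rwa [hrange] at hsp
  -- the canonical decomposition `A = a • id + b • φ`
  set acoef : Module.End k k₂ → k₂ := fun A => (A t - t ^ q * A 1) * (t - t ^ q)⁻¹ with hacoef
  set bcoef : Module.End k k₂ → k₂ := fun A => (t * A 1 - A t) * (t - t ^ q)⁻¹ with hbcoef
  have hdecL : ∀ A : Module.End k k₂,
      A = acoef A • (LinearMap.id : Module.End k k₂) + bcoef A • φ.toLinearMap := by
    intro A
    apply LinearMap.ext_on hspan
    intro x hx
    rcases Set.mem_insert_iff.mp hx with rfl | hx'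
    · simp only [LinearMap.add_apply, LinearMap.smul_apply, LinearMap.id_apply,
        LinearEquiv.coe_coe, smul_eq_mul, hφ1, mul_one, hacoef, hbcoef]
      field_simp
      ring
    · rw [Set.mem_singleton_iff.mp hx']
      simp only [LinearMap.add_apply, LinearMap.smul_apply, LinearMap.id_apply,
        LinearEquiv.coe_coe, smul_eq_mul, hacoef, hbcoef, hφ t]
      field_simp
      ring
  have hdec : ∀ (A : Module.End k k₂) (x : k₂), A x = acoef A * x + bcoef A * x ^ q := by
    intro A x
    conv_lhs => rw [hdecL A]
    simp only [LinearMap.add_apply, LinearMap.smul_apply, LinearMap.id_apply,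
      LinearEquiv.coe_coe, smul_eq_mul, hφ x]
  have hbco : ∀ (B : Module.End k k₂) (a b : k₂), (∀ x, B x = a * x + b * x ^ q) →
      bcoef B = b := by
    intro B a b hB
    simp only [hbcoef, hB, one_pow, mul_one]
    field_simp
    ring
  -- symm formulas
  have hmus : ∀ x : k₂, mu.symm x = (u : k₂)⁻¹ * x := by
    intro x
    rw [LinearEquiv.symm_apply_eq, hmu]
    field_simp
  have hφφ : ∀ x : k₂, φ (φ x) = x := by
    intro x
    rw [hφ, hφ, ← pow_mul, ← pow_two, ← hcard₂]
    exact FiniteField.pow_card x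
  have hφs : ∀ x : k₂, φ.symm x = φ x := by
    intro x
    rw [LinearEquiv.symm_apply_eq, hφφ x]
  -- conjugation formulas (pointwise)
  have hconjmu : ∀ (A : Module.End k k₂) (x : k₂),
      (mu.toLinearMap ∘ₗ A ∘ₗ mu.symm.toLinearMap) x
        = acoef A * x + ((u : k₂) ^ 2 * bcoef A) * x ^ q := by
    intro A x
    simp only [LinearMap.comp_apply, LinearEquiv.coe_coe]
    rw [hmus, hdec A, hmu, mul_pow, hinvq]
    field_simp
  have hconjφ : ∀ (A : Module.End k k₂) (x : k₂),
      (φ.toLinearMap ∘ₗ A ∘ₗ φ.symm.toLinearMap) x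
        = (acoef A) ^ q * x + (bcoef A) ^ q * x ^ q := by
    intro A x
    have hxqq : (x ^ q) ^ q = x := by
      rw [← pow_mul, ← pow_two, ← hcard₂]
      exact FiniteField.pow_card x
    simp only [LinearMap.comp_apply, LinearEquiv.coe_coe]
    rw [hφs, hφ x, hdec A (x ^ q), hxqq, hφ, haddq, mul_pow, mul_pow, hxqq, mul_pow]
  -- the key modular-arithmetic fact
  have hpf : (p : ZMod n) ^ f = -1 := by
    have h0 : ((p ^ f + 1 : ℕ) : ZMod n) = 0 := by
      rw [ZMod.natCast_eq_zero_iff]; exact hndvd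
    push_cast at h0
    linear_combination h0
  have hppow2f : (p : ZMod n) ^ (2 * f) = 1 := by
    rw [mul_comm 2 f, pow_mul, hpf, neg_one_sq]
  tfae_have 3 → 4 := by
    rintro ⟨i, hi⟩
    refine ⟨i, hi, ?_⟩
    have h2' : (p : ZMod n) ^ i = 2 := by
      have hh := (ZMod.intCast_eq_intCast_iff _ _ _).mpr hi
      push_cast at hh
      exact hh
    rw [← ZMod.intCast_zmod_eq_zero_iff_dvd]
    push_cast
    have : (2 : ZMod n) ^ f = (-1 : ZMod n) ^ i := by
      calc (2 : ZMod n) ^ f = ((p : ZMod n) ^ i) ^ f := by rw [h2']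
        _ = ((p : ZMod n) ^ f) ^ i := by rw [← pow_mul, ← pow_mul, mul_comm]
        _ = (-1 : ZMod n) ^ i := by rw [hpf]
    rw [this, sub_self]
  tfae_have 4 → 3 := by
    rintro ⟨i, hi, -⟩
    exact ⟨i, hi⟩
  tfae_have 3 → 2 := by
    rintro ⟨i, hi⟩
    have h2' : (p : ZMod n) ^ i = 2 := by
      have hh := (ZMod.intCast_eq_intCast_iff _ _ _).mpr hi
      push_cast at hh
      exact hh
    obtain ⟨f', rfl⟩ : ∃ f', f = f' + 1 := ⟨f - 1, by omega⟩
    set j := i * (2 * (f' + 1) - 1) with hjdef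
    have hpj : (2 : ZMod n) * (p : ZMod n) ^ j = 1 := by
      have hexp : i + j = 2 * (f' + 1) * i := by
        rw [hjdef]
        have h1 : 2 * (f' + 1) - 1 = 2 * f' + 1 := by omega
        rw [h1]; ring
      calc (2 : ZMod n) * (p : ZMod n) ^ j = (p : ZMod n) ^ i * (p : ZMod n) ^ j := by rw [h2']
        _ = (p : ZMod n) ^ (i + j) := (pow_add _ _ _).symm
        _ = ((p : ZMod n) ^ (2 * (f' + 1))) ^ i := by rw [hexp, pow_mul]
        _ = 1 := by rw [hppow2f, one_pow]
    have hple : 1 ≤ 2 * p ^ j := by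
      have := Nat.one_le_pow j p hp.pos
      omega
    have hdvdn : n ∣ 2 * p ^ j - 1 := by
      rw [← ZMod.natCast_eq_zero_iff]
      have hc : ((2 * p ^ j - 1 : ℕ) : ZMod n)
          = (2 : ZMod n) * (p : ZMod n) ^ j - 1 := by
        rw [Nat.cast_sub hple]
        push_cast
        ring
      rw [hc, hpj, sub_self]
    have hupj : (u : k₂) ^ (2 * p ^ j) = (u : k₂) := by
      have h1 : u ^ (2 * p ^ j - 1) = 1 := by
        rw [← orderOf_dvd_iff_pow_eq_one, hu]; exact hdvdn
      have h2 : u ^ (2 * p ^ j) = u := by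
        have he : 2 * p ^ j - 1 + 1 = 2 * p ^ j := by omega
        rw [← he, pow_succ, h1, one_mul]
      exact_mod_cast congrArg (fun w : k₂ˣ => (w : k₂)) h2
    have haddpj : ∀ x y : k₂, (x + y) ^ p ^ j = x ^ p ^ j + y ^ p ^ j := fun x y =>
      add_pow_char_pow x y p j
    refine ⟨fun A => (bcoef A) ^ p ^ j, ⟨φ.toLinearMap, ?_⟩, ?_, ?_⟩
    · have hb1 : bcoef φ.toLinearMap = 1 := by
        apply hbco _ 0 1
        intro x
        simp [hφ x]
      show bcoef φ.toLinearMap ^ p ^ j ≠ 0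
      rw [hb1]
      simp
    · intro A B
      have hb : bcoef (A + B) = bcoef A + bcoef B := by
        simp only [hbcoef, LinearMap.add_apply]
        ring
      show bcoef (A + B) ^ p ^ j = bcoef A ^ p ^ j + bcoef B ^ p ^ j
      rw [hb, haddpj]
    · intro g hg
      induction hg using Subgroup.closure_induction with
      | mem x hx =>
        rcases Set.mem_insert_iff.mp hx with rfl | hx'
        · -- x = mu
          intro A
          have hb : bcoef (x.toLinearMap ∘ₗ A ∘ₗ x.symm.toLinearMap)
              = (u : k₂) ^ 2 * bcoef A := hbco _ _ _ (hconjmu A)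
          show bcoef (x.toLinearMap ∘ₗ A ∘ₗ x.symm.toLinearMap) ^ p ^ j
              = x (bcoef A ^ p ^ j)
          rw [hb, hmu, mul_pow, ← pow_mul, hupj]
        · rcases Set.mem_singleton_iff.mp hx' with rfl
          intro A
          have hb : bcoef (x.toLinearMap ∘ₗ A ∘ₗ x.symm.toLinearMap)
              = (bcoef A) ^ q := hbco _ _ _ (hconjφ A)
          show bcoef (x.toLinearMap ∘ₗ A ∘ₗ x.symm.toLinearMap) ^ p ^ j
              = x (bcoef A ^ p ^ j)
          rw [hb, hφ, ← pow_mul, ← pow_mul, mul_comm]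
      | one =>
        intro A
        have h1 : ((1 : k₂ ≃ₗ[k] k₂)).toLinearMap ∘ₗ A ∘ₗ
            ((1 : k₂ ≃ₗ[k] k₂)).symm.toLinearMap = A := by
          ext z; rfl
        rw [h1]
        rfl
      | mul x y hx hy ihx ihy =>
        intro A
        have hcomp : (x * y).toLinearMap ∘ₗ A ∘ₗ (x * y).symm.toLinearMap
            = x.toLinearMap ∘ₗ (y.toLinearMap ∘ₗ A ∘ₗ y.symm.toLinearMap) ∘ₗ
              x.symm.toLinearMap := by
          ext z; rfl
        rw [hcomp, ihx, ihy]
        rfl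
      | inv x hx ihx =>
        intro A
        have key : x.toLinearMap ∘ₗ (x.symm.toLinearMap ∘ₗ A ∘ₗ x.toLinearMap) ∘ₗ
            x.symm.toLinearMap = A := by
          ext z
          simp
        have h := ihx (x.symm.toLinearMap ∘ₗ A ∘ₗ x.toLinearMap)
        rw [key] at h
        have hinv1 : (x⁻¹ : k₂ ≃ₗ[k] k₂) = x.symm := rfl
        rw [hinv1, LinearEquiv.symm_symm]
        rw [h, LinearEquiv.symm_apply_apply]
  tfae_have 2 → 1 := by
    rintro ⟨F, h1, h2, h3⟩
    refine ⟨F, h1, h2, fun g hg A => h3 g ?_ A⟩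
    have hle : Subgroup.zpowers mu ≤ Subgroup.closure ({mu, φ} : Set (k₂ ≃ₗ[k] k₂)) :=
      Subgroup.zpowers_le.mpr (Subgroup.subset_closure (Set.mem_insert _ _))
    exact hle hg
  tfae_have 1 → 3 := by
    rintro ⟨F, ⟨A₀, hA₀⟩, hFadd, hFeq⟩
    have hF0 : F 0 = 0 := by
      have h := hFadd 0 0
      rw [add_zero] at h
      exact (left_eq_add.mp h)
    letI : Algebra (ZMod p) k₂ := ZMod.algebra k₂ p
    set F₂ : k₂ → k₂ := fun b => F (b • φ.toLinearMap) with hF₂def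
    have hF₂add : ∀ b c : k₂, F₂ (b + c) = F₂ b + F₂ c := by
      intro b c
      simp only [hF₂def, add_smul]
      exact hFadd _ _
    set E2 : k₂ →+ k₂ := AddMonoidHom.mk' F₂ hF₂add with hE2
    have hsm : ∀ (b x : k₂), (b • φ.toLinearMap) x = b * x ^ q := by
      intro b x
      simp [hφ x, smul_eq_mul]
    have hmuF : ∀ b : k₂, F₂ ((u : k₂) ^ 2 * b) = (u : k₂) * F₂ b := by
      intro b
      have heq : mu.toLinearMap ∘ₗ (b • φ.toLinearMap) ∘ₗ mu.symm.toLinearMap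
          = ((u : k₂) ^ 2 * b) • φ.toLinearMap := by
        apply LinearMap.ext
        intro x
        simp only [LinearMap.comp_apply, LinearEquiv.coe_coe]
        rw [hmus, hsm, hmu, mul_pow, hinvq, hsm]
        ring
      have h := hFeq mu (Subgroup.mem_zpowers mu) (b • φ.toLinearMap)
      rw [heq] at h
      simp only [hF₂def]
      rw [h, hmu]
    have hidF : ∀ a : k₂, F (a • (LinearMap.id : Module.End k k₂)) = 0 := by
      intro a
      have heq : mu.toLinearMap ∘ₗ (a • (LinearMap.id : Module.End k k₂)) ∘ₗ
          mu.symm.toLinearMap = a • (LinearMap.id : Module.End k k₂) := by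
        apply LinearMap.ext
        intro x
        simp only [LinearMap.comp_apply, LinearEquiv.coe_coe, LinearMap.smul_apply,
          LinearMap.id_apply, smul_eq_mul]
        rw [hmus, hmu]
        field_simp
      have h := hFeq mu (Subgroup.mem_zpowers mu) (a • LinearMap.id)
      rw [heq, hmu] at h
      have hz : ((u : k₂) - 1) * F (a • (LinearMap.id : Module.End k k₂)) = 0 := by
        linear_combination -h
      rcases mul_eq_zero.mp hz with h' | h'
      · exact absurd (sub_eq_zero.mp h') hu1
      · exact h'
    have hbne : F₂ (bcoef A₀) ≠ 0 := by
      intro hzero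
      apply hA₀
      calc F A₀ = F (acoef A₀ • LinearMap.id + bcoef A₀ • φ.toLinearMap) := by
            rw [← hdecL A₀]
        _ = F (acoef A₀ • LinearMap.id) + F₂ (bcoef A₀) := hFadd _ _
        _ = 0 := by rw [hidF, hzero, add_zero]
    set b₀ : k₂ := bcoef A₀ with hb₀def
    set v : k₂ := (u : k₂) ^ 2 with hv
    set w : k₂ := (u : k₂) with hw
    have hpow : ∀ (m : ℕ) (b : k₂), F₂ (v ^ m * b) = w ^ m * F₂ b := by
      intro m
      induction m with
      | zero => intro b; simp
      | succ m ih =>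
        intro b
        have hassoc : v ^ (m + 1) * b = v ^ m * (v * b) := by ring
        rw [hassoc, ih, hmuF, pow_succ]
        ring
    have hnat : ∀ (c : ℕ) (x : k₂), F₂ ((c : k₂) * x) = (c : k₂) * F₂ x := by
      intro c x
      rw [← nsmul_eq_mul, ← nsmul_eq_mul]
      exact E2.map_nsmul c x
    have halg : ∀ c : ZMod p, algebraMap (ZMod p) k₂ c = ((c.val : ℕ) : k₂) := by
      intro c
      rw [ZMod.natCast_val]
      rfl
    have hpoly : ∀ (g : (ZMod p)[X]) (b : k₂),
        F₂ (Polynomial.aeval v g * b) = Polynomial.aeval w g * F₂ b := by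
      intro g
      induction g using Polynomial.induction_on' with
      | add r s hr hs =>
        intro b
        rw [map_add, map_add, add_mul, add_mul, hF₂add, hr, hs]
      | monomial m c =>
        intro b
        rw [Polynomial.aeval_monomial, Polynomial.aeval_monomial, halg]
        have hassoc : ((c.val : ℕ) : k₂) * v ^ m * b = ((c.val : ℕ) : k₂) * (v ^ m * b) := by
          ring
        rw [hassoc, hnat, hpow]
        ring
    have hwP : Polynomial.aeval w (minpoly (ZMod p) v) = 0 := by
      have h := hpoly (minpoly (ZMod p) v) b₀
      rw [minpoly.aeval, zero_mul, hF₂def] at h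
      simp only at h
      rw [zero_smul] at h
      rw [hF0] at h
      rcases mul_eq_zero.mp h.symm with h' | h'
      · exact h'
      · exact absurd h' hbne
    have hcard₂' : Fintype.card k₂ = p ^ (2 * f) := by
      rw [hcard₂, hcard, ← pow_mul, mul_comm]
    obtain ⟨j, hjlt, hjw⟩ := frob_conj p (2 * f) hcard₂' (by omega) v w hwP
    have hupow : (u : k₂) ^ (2 * p ^ j) = (u : k₂) := by
      rw [hv, ← pow_mul] at hjw
      exact hjw.symm
    have hple : 1 ≤ 2 * p ^ j := by
      have := Nat.one_le_pow j p hp.pos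
      omega
    have hunits : u ^ (2 * p ^ j - 1) = 1 := by
      have h2 : u ^ (2 * p ^ j) = u := Units.ext (by exact_mod_cast hupow)
      have h3 : u ^ (2 * p ^ j - 1) * u = u ^ (2 * p ^ j) := by
        rw [← pow_succ]
        congr 1
        omega
      rw [h2] at h3
      have h4 : u ^ (2 * p ^ j - 1) * u = 1 * u := by rw [h3, one_mul]
      exact mul_right_cancel h4
    have hdvd' : n ∣ 2 * p ^ j - 1 := by
      rw [← hu]
      exact orderOf_dvd_of_pow_eq_one hunits
    have hmod : (2 : ZMod n) * (p : ZMod n) ^ j = 1 := by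
      have h0 : ((2 * p ^ j - 1 : ℕ) : ZMod n) = 0 := by
        rw [ZMod.natCast_eq_zero_iff]; exact hdvd'
      rw [Nat.cast_sub hple] at h0
      push_cast at h0
      linear_combination h0
    refine ⟨2 * f - j, ?_⟩
    rw [← ZMod.intCast_eq_intCast_iff]
    push_cast
    have hj2f : (2 * f - j) + j = 2 * f := by omega
    calc (p : ZMod n) ^ (2 * f - j)
        = (p : ZMod n) ^ (2 * f - j) * ((2 : ZMod n) * (p : ZMod n) ^ j) := by
          rw [hmod, mul_one]
      _ = 2 * ((p : ZMod n) ^ (2 * f - j) * (p : ZMod n) ^ j) := by ring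
      _ = 2 * (p : ZMod n) ^ (2 * f) := by rw [← pow_add, hj2f]
      _ = 2 := by rw [hppow2f, mul_one]
  tfae_finish
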